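/- Let ψ and φ be anisotropic quasilinear quadratic forms over a field F of characteristic 2, and let L be a purely transcendental field extension of F. If ψ_L is similar to a subform of φ_L, then ψ is similar to a subform of φ. -/

import Mathlib

open scoped BigOperators

namespace QLin

variable (K : Type) [Field K]

/-- Value of the diagonal (quasilinear) quadratic form with coefficients `d` at the vector `v`. -/
def qf {n : ℕ} (d : Fin n → K) (v : Fin n → K) : K := ∑ i, d i * v i ^ 2

/-- The set `D(q)` of values represented by the diagonal form `d`. -/
def Dset {n : ℕ} (d : Fin n → K) : Set K := Set.range (qf K d)

/-- A diagonal quadratic form is anisotropic if it has no nontrivial zero. -/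
def Anis {n : ℕ} (d : Fin n → K) : Prop := ∀ v : Fin n → K, qf K d v = 0 → v = 0

/-- The isotropy index `i₀`: the maximal dimension of a totally isotropic subspace. -/
noncomputable def i0 {n : ℕ} (d : Fin n → K) : ℕ :=
  sSup {m | ∃ W : Submodule K (Fin n → K), (∀ v ∈ W, qf K d v = 0) ∧ Module.finrank K W = m}

/-- Isometry of two diagonal quadratic forms (possibly of different ambient dimensions;
an isometry forces the dimensions to agree). -/
def Isom {n m : ℕ} (d : Fin n → K) (e : Fin m → K) : Prop :=
  ∃ φ : (Fin n → K) ≃ₗ[K] (Fin m → K), ∀ v, qf K e (φ v) = qf K d v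

/-- `r` is a subform of `q` : `q ≅ r ⊥ s` for some form `s`. -/
def Subform {n m : ℕ} (r : Fin n → K) (q : Fin m → K) : Prop :=
  ∃ (k : ℕ) (s : Fin k → K), Isom K q (Fin.append r s)

/-- `d` is similar to `e` : `e ≅ a • d` for some `a ≠ 0`. -/
def Similar {n m : ℕ} (d : Fin n → K) (e : Fin m → K) : Prop :=
  ∃ a : K, a ≠ 0 ∧ Isom K (fun i => a * d i) e

/-- `d` is similar to a subform of `q`. -/
def SimSubform {n m : ℕ} (d : Fin n → K) (q : Fin m → K) : Prop :=
  ∃ a : K, a ≠ 0 ∧ Subform K (fun i => a * d i) q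

/-- Tensor product of diagonal quadratic forms. -/
def tens {n m : ℕ} (d : Fin n → K) (e : Fin m → K) : Fin (n * m) → K :=
  fun k => d (finProdFinEquiv.symm k).1 * e (finProdFinEquiv.symm k).2

/-- `q` is divisible by `π` : `q ≅ π ⊗ r` for some form `r`. -/
def Divisible {n m : ℕ} (π : Fin n → K) (q : Fin m → K) : Prop :=
  ∃ (k : ℕ) (r : Fin k → K), Isom K q (tens K π r)

/-- The diagonal coefficients of the `s`-fold quasi-Pfister form `⟨⟨a₁,…,a_s⟩⟩ =
`⟨1,a₁⟩ ⊗ ⋯ ⊗ ⟨1,a_s⟩`: the products of the `a i` over all subsets of the index set. -/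
def qPfister {s : ℕ} (a : Fin s → K) : Fin (2 ^ s) → K :=
  fun j => ∏ i : Fin s, if Nat.testBit (j : ℕ) (i : ℕ) then a i else 1

/-- `r` is (a representative of) the anisotropic part of `q`:
`r` is anisotropic and `q ≅ i₀(q)·⟨0⟩ ⊥ r`. -/
def IsAnisPart {n m : ℕ} (r : Fin n → K) (q : Fin m → K) : Prop :=
  Anis K r ∧ ∃ k : ℕ, Isom K q (Fin.append (fun _ : Fin k => (0 : K)) r)

/-- The divisibility index `𝔡₀(q)`: the largest `s` such that the anisotropic part of `q`
is divisible by an `s`-fold quasi-Pfister form. -/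
noncomputable def d0 {n : ℕ} (q : Fin n → K) : ℕ :=
  sSup {s | ∃ a : Fin s → K, (∀ i, a i ≠ 0) ∧
    ∃ (k : ℕ) (r : Fin k → K), IsAnisPart K r q ∧ Divisible K (qPfister K a) r}

/-- The norm field `N(q)`: the smallest subfield of `K` containing all squares and all
ratios of nonzero represented values of `q`. -/
def normField {n : ℕ} (d : Fin n → K) : Subfield K :=
  Subfield.closure ((Set.range fun x : K => x ^ 2) ∪
    {z | ∃ a ∈ Dset K d, ∃ b ∈ Dset K d, b ≠ 0 ∧ z = a / b})

/-- `lndeg(q)`: the base-2 logarithm of the dimension of the norm form of `q`, i.e. the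
(unique, when `q` is nonzero) `s` such that some anisotropic `s`-fold quasi-Pfister form
represents exactly the elements of the norm field of `q`. -/
noncomputable def lndeg {n : ℕ} (d : Fin n → K) : ℕ :=
  sInf {s | ∃ a : Fin s → K, (∀ i, a i ≠ 0) ∧ Anis K (qPfister K a) ∧
    Dset K (qPfister K a) = (normField K d : Set K)}

/-- Base change of a diagonal quadratic form along a field extension `F → K`. -/
def bc (F : Type) [Field F] (K : Type) [Field K] [Algebra F K] {n : ℕ} (d : Fin n → F) :
    Fin n → K := fun i => algebraMap F K (d i)

/-- The defining polynomial of the standard affine chart of the projective quadric `{p = 0}`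
attached to a diagonal form `p` of dimension `n + 2` (dehomogenized at the last variable). -/
noncomputable def chartD (F : Type) [Field F] {n : ℕ} (d : Fin (n + 2) → F) :
    MvPolynomial (Fin (n + 1)) F :=
  (∑ i : Fin (n + 1), MvPolynomial.C (d i.castSucc) * MvPolynomial.X i ^ 2) +
    MvPolynomial.C (d (Fin.last (n + 1)))

/-- `K` is (realizes) the function field `F(p)` of the projective quadric `{p = 0}`:
`K` is generated over `F` by a point `x` of the affine chart of the quadric whose
ideal of relations is exactly the one generated by the defining equation. -/
def IsFunFld (F : Type) [Field F] {n : ℕ} (p : Fin (n + 2) → F) (K : Type) [Field K]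
    [Algebra F K] : Prop :=
  ∃ x : Fin (n + 1) → K,
    RingHom.ker (MvPolynomial.aeval x : MvPolynomial (Fin (n + 1)) F →ₐ[F] K) =
      Ideal.span {chartD F p} ∧
    ∀ z : K, ∃ a b : MvPolynomial (Fin (n + 1)) F,
      MvPolynomial.aeval x b ≠ 0 ∧ z * MvPolynomial.aeval x b = MvPolynomial.aeval x a

/-- The full diagonal polynomial of a diagonal form (the equation of the affine cone). -/
noncomputable def diagPoly (F : Type) [Field F] {n : ℕ} (d : Fin n → F) :
    MvPolynomial (Fin n) F :=
  ∑ i : Fin n, MvPolynomial.C (d i) * MvPolynomial.X i ^ 2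

/-- `M` is (realizes) the affine cone function field `F[p]`, i.e. the fraction field of
`F[T₁,…,Tₙ]/(p(T))`. -/
def IsAffFunFld (F : Type) [Field F] {n : ℕ} (p : Fin n → F) (M : Type) [Field M]
    [Algebra F M] : Prop :=
  ∃ x : Fin n → M,
    RingHom.ker (MvPolynomial.aeval x : MvPolynomial (Fin n) F →ₐ[F] M) =
      Ideal.span {diagPoly F p} ∧
    ∀ z : M, ∃ a b : MvPolynomial (Fin n) F,
      MvPolynomial.aeval x b ≠ 0 ∧ z * MvPolynomial.aeval x b = MvPolynomial.aeval x a

/-- `L` is a purely transcendental field extension of `F`. -/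
def IsPurelyTransc (F L : Type) [Field F] [Field L] [Algebra F L] : Prop :=
  ∃ s : Set L, AlgebraicIndependent F (Subtype.val : s → L) ∧
    IntermediateField.adjoin F s = ⊤

end QLin

namespace QLinAux

open QLin

variable {K : Type} [Field K]

lemma charP_two {K : Type*} [Field K] (h2 : (2:K) = 0) : CharP K 2 :=
  (CharP.charP_iff_prime_eq_zero Nat.prime_two).mpr h2

lemma qf_single {n : ℕ} (d : Fin n → K) (i : Fin n) : qf K d (Pi.single i 1) = d i := by
  classical
  rw [qf, Finset.sum_eq_single i]
  · simp
  · intro b _ hb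
    simp [Pi.single_apply, hb]
  · simp

lemma anis_ne_zero {n : ℕ} {d : Fin n → K} (h : Anis K d) (i : Fin n) : d i ≠ 0 := by
  intro h0
  have h1 := h (Pi.single i 1) (by rw [qf_single, h0])
  have h2 := congrFun h1 i
  simp at h2

lemma isom_symm {n m : ℕ} {d : Fin n → K} {e : Fin m → K} (h : Isom K d e) : Isom K e d := by
  obtain ⟨Φ, hΦ⟩ := h
  exact ⟨Φ.symm, fun v => by
    have := hΦ (Φ.symm v)
    simpa using this.symm⟩

lemma isom_trans {n m k : ℕ} {d : Fin n → K} {e : Fin m → K} {f : Fin k → K}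
    (h1 : Isom K d e) (h2 : Isom K e f) : Isom K d f := by
  obtain ⟨Φ, hΦ⟩ := h1
  obtain ⟨Ψ, hΨ⟩ := h2
  exact ⟨Φ.trans Ψ, fun v => by simp [LinearEquiv.trans_apply, hΨ, hΦ]⟩

lemma isom_reindex {n m : ℕ} (e : Fin n ≃ Fin m) (d : Fin m → K) :
    Isom K (d ∘ e) d := by
  refine ⟨LinearEquiv.funCongrLeft K K e.symm, fun v => ?_⟩
  have hap : ∀ j, (LinearEquiv.funCongrLeft K K e.symm) v j = v (e.symm j) := fun j => rfl
  rw [qf, qf]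
  simp_rw [hap]
  rw [← Equiv.sum_comp e (fun j => d j * (v (e.symm j))^2)]
  simp

lemma isom_of_matrix (h2 : (2:K) = 0) {N : ℕ} (q d : Fin N → K)
    (c : Matrix (Fin N) (Fin N) K) (hdet : c.det ≠ 0)
    (hrel : ∀ j, q j = ∑ i, (c i j)^2 * d i) : Isom K q d := by
  haveI : CharP K 2 := charP_two h2
  have hu : IsUnit c.det := isUnit_iff_ne_zero.mpr hdet
  refine ⟨c.toLinearEquiv' (c.invertibleOfIsUnitDet hu), fun v => ?_⟩
  have happ : ∀ i, (c.toLinearEquiv' (c.invertibleOfIsUnitDet hu) v) i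
      = ∑ j, c i j * v j := by
    intro i
    rfl
  rw [qf, qf]
  calc ∑ i, d i * ((c.toLinearEquiv' (c.invertibleOfIsUnitDet hu) v) i)^2
      = ∑ i, d i * ∑ j, (c i j)^2 * (v j)^2 := by
        apply Finset.sum_congr rfl
        intro i _
        rw [happ, CharTwo.sum_sq]
        congr 1
        apply Finset.sum_congr rfl
        intro j _
        ring
    _ = ∑ j, (∑ i, (c i j)^2 * d i) * (v j)^2 := by
        simp_rw [Finset.mul_sum, Finset.sum_mul]
        rw [Finset.sum_comm]
        apply Finset.sum_congr rfl
        intro j _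
        apply Finset.sum_congr rfl
        intro i _
        ring
    _ = ∑ j, q j * (v j)^2 := by
        apply Finset.sum_congr rfl
        intro j _
        rw [hrel j]

section Poly
variable {F : Type*} [Field F] {σ : Type*}

lemma two_smul_inj (v e : σ →₀ ℕ) (h : (2:ℕ) • v = 2 • e) : v = e := by
  ext i
  have := DFunLike.congr_fun h i
  simp [Finsupp.smul_apply] at this
  omega

lemma sq_expand (h2 : (2:F) = 0) (p : MvPolynomial σ F) :
    p^2 = ∑ v ∈ p.support, MvPolynomial.monomial (2 • v) ((MvPolynomial.coeff v p)^2) := by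
  haveI : CharP F 2 := charP_two h2
  conv_lhs => rw [p.as_sum]
  rw [CharTwo.sum_sq]
  exact Finset.sum_congr rfl fun v _ => MvPolynomial.monomial_pow

lemma coeff_sq_even (h2 : (2:F) = 0) (p : MvPolynomial σ F) (e : σ →₀ ℕ) :
    MvPolynomial.coeff (2 • e) (p^2) = (MvPolynomial.coeff e p)^2 := by
  classical
  rw [sq_expand h2, MvPolynomial.coeff_sum, Finset.sum_eq_single e]
  · rw [MvPolynomial.coeff_monomial, if_pos rfl]
  · intro v _ hv
    rw [MvPolynomial.coeff_monomial, if_neg (fun h => hv (two_smul_inj v e h))]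
  · intro he
    rw [MvPolynomial.coeff_monomial, if_pos rfl, MvPolynomial.notMem_support_iff.mp he]
    ring

lemma coeff_sq_odd (h2 : (2:F) = 0) (p : MvPolynomial σ F) (d : σ →₀ ℕ)
    (hd : ¬ ∃ e, d = 2 • e) : MvPolynomial.coeff d (p^2) = 0 := by
  classical
  rw [sq_expand h2, MvPolynomial.coeff_sum]
  exact Finset.sum_eq_zero fun v _ => by
    rw [MvPolynomial.coeff_monomial, if_neg (fun h => hd ⟨v, h.symm⟩)]

end Poly

lemma descend {F L : Type} [Field F] [Field L] [Algebra F L] (h2 : (2:F) = 0)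
    {σ : Type} (x : σ → L) (hind : AlgebraicIndependent F x)
    (htop : ∀ z : L, z ∈ IntermediateField.adjoin F (Set.range x))
    {n m : ℕ} (hn : 0 < n) (ψ : Fin n → F) (φ : Fin m → F) (hψ0 : ψ ⟨0, hn⟩ ≠ 0)
    (a : L) (ha : a ≠ 0) (c : Fin n → Fin m → L)
    (hrel : ∀ i, a * algebraMap F L (ψ i) = ∑ j, (c i j)^2 * algebraMap F L (φ j)) :
    ∃ a' : F, a' ≠ 0 ∧ ∃ c' : Fin n → Fin m → F,
      ∀ i, a' * ψ i = ∑ j, (c' i j)^2 * φ j := by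
  classical
  have hratio : ∀ z : L, ∃ p q : MvPolynomial σ F,
      MvPolynomial.aeval x q ≠ 0 ∧ z * MvPolynomial.aeval x q = MvPolynomial.aeval x p := by
    intro z
    by_cases hz : z = 0
    · exact ⟨0, 1, by simp, by simp [hz]⟩
    · obtain ⟨p, q, hpq⟩ := (IntermediateField.mem_adjoin_range_iff F x z).mp (htop z)
      have hq : MvPolynomial.aeval x q ≠ 0 := by
        intro h0; rw [h0, div_zero] at hpq; exact hz hpq
      exact ⟨p, q, hq, by rw [hpq]; field_simp⟩
  obtain ⟨P, Q, hQ, hPQ⟩ := hratio a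
  choose Pc Qc hQc hPQc using fun i j => hratio (c i j)
  set Tpoly : MvPolynomial σ F := Q * ∏ ij : Fin n × Fin m, Qc ij.1 ij.2 with hT
  have hTval : MvPolynomial.aeval x Tpoly ≠ 0 := by
    rw [hT, map_mul, map_prod]
    exact mul_ne_zero hQ (Finset.prod_ne_zero_iff.mpr (fun ij _ => hQc ij.1 ij.2))
  set A : MvPolynomial σ F := P * Q * (∏ ij : Fin n × Fin m, Qc ij.1 ij.2)^2 with hA
  have hAval : MvPolynomial.aeval x A = a * (MvPolynomial.aeval x Tpoly)^2 := by
    have h1 : MvPolynomial.aeval x A = (MvPolynomial.aeval x P) * (MvPolynomial.aeval x Q)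
        * (MvPolynomial.aeval x (∏ ij : Fin n × Fin m, Qc ij.1 ij.2))^2 := by
      rw [hA]; simp [map_mul, map_pow]
    rw [h1, ← hPQ, hT, map_mul]; ring
  set Cc : Fin n → Fin m → MvPolynomial σ F := fun i j =>
    Pc i j * (Q * ∏ ij' ∈ Finset.univ.erase (i,j), Qc ij'.1 ij'.2) with hCc
  have hCval : ∀ i j, MvPolynomial.aeval x (Cc i j) = c i j * MvPolynomial.aeval x Tpoly := by
    intro i j
    have hprod : (MvPolynomial.aeval x (Qc i j)) *
        ∏ ij' ∈ Finset.univ.erase (i,j), MvPolynomial.aeval x (Qc ij'.1 ij'.2)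
        = ∏ ij' : Fin n × Fin m, MvPolynomial.aeval x (Qc ij'.1 ij'.2) :=
      Finset.mul_prod_erase _ (fun ij' => MvPolynomial.aeval x (Qc ij'.1 ij'.2))
        (Finset.mem_univ (i,j))
    have h1 : MvPolynomial.aeval x (Cc i j) = (MvPolynomial.aeval x (Pc i j)) *
        ((MvPolynomial.aeval x Q) *
          ∏ ij' ∈ Finset.univ.erase (i,j), MvPolynomial.aeval x (Qc ij'.1 ij'.2)) := by
      rw [hCc]; simp [map_mul, map_prod]
    rw [h1, ← hPQc i j, hT, map_mul, map_prod, ← hprod]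
    ring
  have hpoly : ∀ i, A * MvPolynomial.C (ψ i) = ∑ j, (Cc i j)^2 * MvPolynomial.C (φ j) := by
    intro i
    apply hind
    rw [map_mul, MvPolynomial.aeval_C, map_sum]
    simp_rw [map_mul, map_pow, MvPolynomial.aeval_C, hCval]
    rw [hAval]
    have h3 : ∀ j, (c i j * MvPolynomial.aeval x Tpoly)^2 * algebraMap F L (φ j)
        = ((c i j)^2 * algebraMap F L (φ j)) * (MvPolynomial.aeval x Tpoly)^2 :=
      fun j => by ring
    simp_rw [h3, ← Finset.sum_mul, ← hrel i]
    ring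
  have hAne : A ≠ 0 := by
    intro h0
    rw [h0, map_zero] at hAval
    rcases mul_eq_zero.mp hAval.symm with h | h
    · exact ha h
    · exact hTval (pow_eq_zero_iff (by norm_num) |>.mp h)
  have key : ∀ (i : Fin n) (d : σ →₀ ℕ), MvPolynomial.coeff d A * ψ i
      = ∑ j, MvPolynomial.coeff d ((Cc i j)^2) * φ j := by
    intro i d
    have hcong := congrArg (MvPolynomial.coeff d) (hpoly i)
    rw [mul_comm A _, MvPolynomial.coeff_C_mul, MvPolynomial.coeff_sum] at hcong
    simp_rw [show ∀ j, (Cc i j)^2 * MvPolynomial.C (φ j)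
        = MvPolynomial.C (φ j) * (Cc i j)^2 from fun j => mul_comm _ _,
      MvPolynomial.coeff_C_mul] at hcong
    rw [mul_comm, hcong]
    exact Finset.sum_congr rfl fun j _ => mul_comm _ _
  have hexists : ∃ e : σ →₀ ℕ, MvPolynomial.coeff (2 • e) A ≠ 0 := by
    by_contra hno
    push_neg at hno
    apply hAne
    apply MvPolynomial.ext
    intro d
    rw [MvPolynomial.coeff_zero]
    by_cases hd : ∃ e, d = 2 • e
    · obtain ⟨e, rfl⟩ := hd; exact hno e
    · have h0 := key ⟨0, hn⟩ d
      simp_rw [coeff_sq_odd h2 _ _ hd] at h0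
      simp only [zero_mul, Finset.sum_const_zero] at h0
      exact (mul_eq_zero.mp h0).resolve_right hψ0
  obtain ⟨e, he⟩ := hexists
  refine ⟨MvPolynomial.coeff (2 • e) A, he, fun i j => MvPolynomial.coeff e (Cc i j), fun i => ?_⟩
  have hk := key i (2 • e)
  simp_rw [coeff_sq_even h2] at hk
  exact hk

lemma fin_append_eq_elim {α : Type*} {n k : ℕ} (A : Fin n → α) (B : Fin k → α) (x : Fin (n+k)) :
    Fin.append A B x = Sum.elim A B (finSumFinEquiv.symm x) := by
  induction x using Fin.addCases with
  | left i => rw [Fin.append_left, finSumFinEquiv_symm_apply_castAdd, Sum.elim_inl]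
  | right i => rw [Fin.append_right, finSumFinEquiv_symm_apply_natAdd, Sum.elim_inr]

set_option maxHeartbeats 2000000 in
set_option synthInstance.maxHeartbeats 200000 in
lemma subform_of_rel (h2 : (2:K) = 0) {n m : ℕ} {ψ : Fin n → K} {φ : Fin m → K}
    (hψ : Anis K ψ) (hφ : Anis K φ) (a : K) (ha : a ≠ 0)
    (c : Fin n → Fin m → K) (hrel : ∀ i, a * ψ i = ∑ j, (c i j)^2 * φ j) :
    Subform K (fun i => a * ψ i) φ := by
  classical
  haveI : CharP K 2 := charP_two h2
  haveI : Fact (Nat.Prime 2) := ⟨Nat.prime_two⟩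
  set Fq : Subfield K := (frobenius K 2).fieldRange with hFq
  have hsqmem : ∀ y : K, y^2 ∈ Fq := fun y => ⟨y, by rw [frobenius_def]⟩
  have hsq : ∀ z : ↥Fq, ∃ y : K, y^2 = (z : K) := fun z => by
    obtain ⟨y, hy⟩ := z.2
    exact ⟨y, by rw [← hy, frobenius_def]⟩
  -- linear independence of φ over the subfield of squares
  have liφ : LinearIndependent ↥Fq φ := by
    rw [Fintype.linearIndependent_iff]
    intro g hg
    have hex : ∀ j, ∃ y : K, y^2 = (g j : K) := fun j => hsq (g j)
    choose μ hμ using hex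
    have hq0 : qf K φ μ = 0 := by
      rw [qf]
      calc ∑ j, φ j * μ j ^ 2 = ∑ j, g j • φ j := by
            apply Finset.sum_congr rfl
            intro j _
            show φ j * μ j ^ 2 = (g j : K) * φ j
            rw [hμ j]; ring
        _ = 0 := hg
    have h0 := hφ μ hq0
    intro j
    apply Subtype.ext
    show (g j : K) = 0
    rw [← hμ j, congrFun h0 j]
    simp
  set D := Submodule.span ↥Fq (Set.range φ) with hD
  set bφ : Module.Basis (Fin m) ↥Fq ↥D := Module.Basis.span liφ with hbφdef
  have hmem : ∀ i, a * ψ i ∈ D := by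
    intro i
    rw [hrel i]
    apply Submodule.sum_mem
    intro j _
    have heq : (c i j)^2 * φ j = (⟨(c i j)^2, hsqmem (c i j)⟩ : ↥Fq) • φ j := rfl
    rw [heq]
    exact Submodule.smul_mem _ _ (Submodule.subset_span ⟨j, rfl⟩)
  set w : Fin n → ↥D := fun i => ⟨a * ψ i, hmem i⟩ with hw
  have liw : LinearIndependent ↥Fq w := by
    rw [Fintype.linearIndependent_iff]
    intro g hg
    have hex : ∀ i, ∃ y : K, y^2 = (g i : K) := fun i => hsq (g i)
    choose μ hμ using hex
    have hg' : ∑ i, (g i : K) * (a * ψ i) = 0 := by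
      have h1 := congrArg (fun z : ↥D => (z : K)) hg
      simp only [AddSubmonoidClass.coe_finset_sum] at h1
      exact h1
    have hmul : a * qf K ψ μ = 0 := by
      rw [qf, Finset.mul_sum, ← hg']
      apply Finset.sum_congr rfl
      intro i _
      rw [← hμ i]; ring
    have hμ0 := hψ μ ((mul_eq_zero.mp hmul).resolve_left ha)
    intro i
    apply Subtype.ext
    show (g i : K) = 0
    rw [← hμ i, congrFun hμ0 i]
    simp
  haveI : FiniteDimensional ↥Fq ↥D := Module.Finite.of_basis bφ
  set U := Submodule.span ↥Fq (Set.range w) with hU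
  obtain ⟨U', hcompl⟩ := Submodule.exists_isCompl U
  set k := Module.finrank ↥Fq ↥U' with hk
  set bU : Module.Basis (Fin n) ↥Fq ↥U := Module.Basis.span liw with hbU
  set bU' : Module.Basis (Fin k) ↥Fq ↥U' :=
    (haveI := Module.Free.of_divisionRing ↥Fq ↥U'; Module.finBasis ↥Fq ↥U') with hbU'
  have hm : n + k = m := by
    have h1 : Module.finrank ↥Fq ↥U = n := by rw [Module.finrank_eq_card_basis bU]; simp
    have h2' : Module.finrank ↥Fq ↥D = m := by rw [Module.finrank_eq_card_basis bφ]; simp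
    have h3 := Submodule.finrank_add_eq_of_isCompl hcompl
    omega
  set bD : Module.Basis (Fin n ⊕ Fin k) ↥Fq ↥D :=
    (bU.prod bU').map (Submodule.prodEquivOfIsCompl U U' hcompl) with hbD
  set G : Fin n ⊕ Fin k → K := fun t => ((bD t : ↥D) : K) with hG
  have hGl : ∀ i, G (Sum.inl i) = a * ψ i := by
    intro i
    have hp : (bU.prod bU') (Sum.inl i) = (bU i, 0) := by
      ext
      · rw [Module.Basis.prod_apply_inl_fst]
      · rw [Module.Basis.prod_apply_inl_snd]
    have hbDi : bD (Sum.inl i) = ((bU i : ↥D)) := by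
      rw [hbD, Module.Basis.map_apply, hp, Submodule.coe_prodEquivOfIsCompl']
      simp
    show ((bD (Sum.inl i) : ↥D) : K) = a * ψ i
    rw [hbDi]
    have hspan : ((bU i : ↥D)) = w i := congrArg Subtype.val (Module.Basis.span_apply liw i)
    rw [hspan]
  set s : Fin k → K := fun t => G (Sum.inr t) with hs
  set e : (Fin n ⊕ Fin k) ≃ Fin m := finSumFinEquiv.trans (finCongr hm) with he
  set bD' : Module.Basis (Fin m) ↥Fq ↥D := bD.reindex e with hbD'
  set g : Fin m → K := fun i => G (e.symm i) with hg
  have hpmem : ∀ j, φ j ∈ D := fun j => Submodule.subset_span ⟨j, rfl⟩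
  set pφ : Fin m → ↥D := fun j => ⟨φ j, hpmem j⟩ with hpφ
  have hbφeq : ⇑bφ = pφ := funext fun j => Subtype.ext (congrArg Subtype.val (Module.Basis.span_apply liφ j))
  set M : Matrix (Fin m) (Fin m) ↥Fq := bD'.toMatrix ⇑bφ with hM
  haveI : Invertible M := bD'.invertibleToMatrix bφ
  have hdetM : M.det ≠ 0 := (Matrix.isUnit_det_of_invertible M).ne_zero
  choose sqr hsqr using hsq
  set c' : Matrix (Fin m) (Fin m) K := fun i j => sqr (M i j) with hc'
  have hdet : c'.det ≠ 0 := by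
    have hmap : c'.map (frobenius K 2) = M.map (Fq.subtype) := by
      ext i j
      show frobenius K 2 (sqr (M i j)) = Fq.subtype (M i j)
      rw [frobenius_def, hsqr (M i j)]
      rfl
    have h1 : (c'.det)^2 = (M.map (Fq.subtype)).det := by
      have hd := RingHom.map_det (frobenius K 2) c'
      rw [RingHom.mapMatrix_apply, hmap, frobenius_def] at hd
      exact hd
    have h2' : (M.map (Fq.subtype)).det = Fq.subtype M.det := by
      rw [RingHom.map_det, RingHom.mapMatrix_apply]
    intro h0
    rw [h0, h2'] at h1
    have hz : (M.det : K) = 0 := by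
      have : (0:K) = Fq.subtype M.det := by rw [← h1]; ring
      simpa using this.symm
    exact hdetM (Subtype.ext (by simpa using hz))
  have hbD'val : ∀ i, ((bD' i : ↥D) : K) = g i := by
    intro i
    rw [hbD', Module.Basis.reindex_apply, hg]
  have hφrel : ∀ j, φ j = ∑ i, (c' i j)^2 * g i := by
    intro j
    have hsum := bD'.sum_repr (pφ j)
    have hcsum : ((∑ i, bD'.repr (pφ j) i • bD' i : ↥D) : K) = φ j := by rw [hsum]
    rw [← hcsum, AddSubmonoidClass.coe_finset_sum]
    apply Finset.sum_congr rfl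
    intro i _
    have h1 : ((bD'.repr (pφ j) i • bD' i : ↥D) : K)
        = (bD'.repr (pφ j) i : K) * ((bD' i : ↥D) : K) := rfl
    rw [h1, hbD'val]
    have h2' : (bD'.repr (pφ j) i : K) = (c' i j)^2 := by
      have hMij : M i j = bD'.repr (pφ j) i := by
        rw [hM, Module.Basis.toMatrix_apply, hbφeq]
      rw [← hMij, hc', hsqr (M i j)]
    rw [h2']
  have Isom1 : Isom K φ g := isom_of_matrix h2 φ g c' hdet hφrel
  have hGelim : G = Sum.elim (fun i => a * ψ i) s := by
    funext t
    cases t with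
    | inl i => exact hGl i
    | inr t => rfl
  have happ : Fin.append (fun i => a * ψ i) s = g ∘ (finCongr hm) := by
    funext x
    have h4 : e.symm ((finCongr hm) x) = finSumFinEquiv.symm x := by
      rw [he]; simp
    calc Fin.append (fun i => a * ψ i) s x
        = Sum.elim (fun i => a * ψ i) s (finSumFinEquiv.symm x) := fin_append_eq_elim _ _ x
      _ = G (finSumFinEquiv.symm x) := by rw [← hGelim]
      _ = G (e.symm ((finCongr hm) x)) := by rw [h4]
      _ = (g ∘ (finCongr hm)) x := rfl
  refine ⟨k, s, ?_⟩
  have Isom2 : Isom K (g ∘ (finCongr hm)) g := isom_reindex (finCongr hm) g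
  rw [happ]
  exact isom_trans Isom1 (isom_symm Isom2)

end QLinAux

open QLin in
/-- Let `ψ` and `φ` be anisotropic quasilinear quadratic forms over a
field `F` of characteristic `2`, and let `L` be a purely transcendental field extension
of `F`. If `ψ_L` is similar to a subform of `φ_L`, then `ψ` is similar to a subform
of `φ`. -/
theorem statement10 (F : Type) [Field F] (h2 : (2 : F) = 0) {n m : ℕ}
    (ψ : Fin n → F) (φ : Fin m → F) (hψ : Anis F ψ) (hφ : Anis F φ)
    (L : Type) [Field L] [Algebra F L] (hL : IsPurelyTransc F L)
    (h : SimSubform L (bc F L ψ) (bc F L φ)) :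
    SimSubform F ψ φ := by
  classical
  open QLinAux in
  obtain ⟨a, ha, k0, s0, hIso⟩ := h
  have step1 : ∀ i : Fin n, ∃ u : Fin m → L,
      a * algebraMap F L (ψ i) = ∑ j, (u j)^2 * algebraMap F L (φ j) := by
    intro i
    obtain ⟨Φ, hΦ⟩ := hIso
    refine ⟨Φ.symm (Pi.single (Fin.castAdd k0 i) 1), ?_⟩
    have h1 := hΦ (Φ.symm (Pi.single (Fin.castAdd k0 i) 1))
    rw [LinearEquiv.apply_symm_apply] at h1
    have h2' : qf L (Fin.append (fun i => a * bc F L ψ i) s0) (Pi.single (Fin.castAdd k0 i) 1)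
        = a * algebraMap F L (ψ i) := by
      rw [QLinAux.qf_single, Fin.append_left]
      rfl
    rw [h2'] at h1
    rw [h1, qf]
    apply Finset.sum_congr rfl
    intro j _
    show bc F L φ j * _ = _
    rw [bc]
    ring
  by_cases hn : n = 0
  · subst hn
    exact ⟨1, one_ne_zero, QLinAux.subform_of_rel h2 hψ hφ 1 one_ne_zero
      (fun i => Fin.elim0 i) (fun i => Fin.elim0 i)⟩
  · choose c hc using step1
    obtain ⟨S, hindep, htop⟩ := hL
    have htop' : ∀ z : L, z ∈ IntermediateField.adjoin F (Set.range (Subtype.val : S → L)) := by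
      intro z
      rw [Subtype.range_coe, htop]
      trivial
    have hnpos : 0 < n := Nat.pos_of_ne_zero hn
    have hψ0 : ψ ⟨0, hnpos⟩ ≠ 0 := QLinAux.anis_ne_zero hψ _
    obtain ⟨a', ha', c', hrel'⟩ := QLinAux.descend h2 _ hindep htop' hnpos ψ φ hψ0 a ha c hc
    exact ⟨a', ha', QLinAux.subform_of_rel h2 hψ hφ a' ha' c' hrel'⟩
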